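/- arXiv:1406.4470 — 3 statements merged into one kernel-verified Lean document; each statement's English description precedes it below -/
import Mathlib

section
/- Let N be a prime number and a ∈ ℤ^N. The vectors a, rot(a), ..., rot^{N-1}(a) are linearly independent if and only if a(x) = Σ_{n=0}^{N-1} a_n x^n is not divisible by x − 1 and not divisible by 1 + x + ... + x^{N-1} (in ℚ[x]). -/
open Polynomial

/-- The rotational shift operator on `ℝ^N`. -/
def rotR {N : ℕ} [NeZero N] (x : Fin N → ℝ) : Fin N → ℝ := fun i => x (i - 1)

open Fin.NatCast

lemma rotR_iter {N : ℕ} [NeZero N] (k : ℕ) (x : Fin N → ℝ) (i : Fin N) :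
    rotR^[k] x i = x (i - (k : Fin N)) := by
  induction k generalizing i with
  | zero => simp
  | succ k ih =>
    rw [Function.iterate_succ_apply']
    show (rotR^[k] x) (i - 1) = _
    rw [ih]
    congr 1
    push_cast
    abel

/-- For `N` prime, the rotations of `a ∈ ℤ^N` are linearly independent iff
`a(x)` is divisible neither by `x − 1` nor by `1 + x + ... + x^{N-1}` in `ℚ[x]`. -/
theorem stmt7 (N : ℕ) [NeZero N] (hN : N.Prime) (a : Fin N → ℤ) :
    LinearIndependent ℝ (fun k : Fin N => rotR^[(k : ℕ)] (fun i => (a i : ℝ))) ↔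
      (¬ ((X : Polynomial ℚ) - 1 ∣ ∑ n : Fin N, C ((a n : ℚ)) * X ^ (n : ℕ)) ∧
       ¬ ((∑ n ∈ Finset.range N, (X : Polynomial ℚ) ^ n) ∣
            ∑ n : Fin N, C ((a n : ℚ)) * X ^ (n : ℕ))) := by
  haveI : Fact N.Prime := ⟨hN⟩
  set A : ℚ[X] := ∑ n : Fin N, C ((a n : ℚ)) * X ^ (n : ℕ) with hA
  set f : ℚ[X] := X ^ N - 1 with hf_def
  have hfm : f.Monic := by
    simpa using monic_X_pow_sub_C (1 : ℚ) (NeZero.ne N)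
  have hf0 : f ≠ 0 := hfm.ne_zero
  have hdeg : f.natDegree = N := by
    simpa using natDegree_X_pow_sub_C (n := N) (r := (1 : ℚ))
  -- Step 1: reduce real independence to rational independence of the circulant rows
  set M : Matrix (Fin N) (Fin N) ℚ := Matrix.of (fun k i => (a (i - k) : ℚ)) with hM
  have h1 : LinearIndependent ℝ (fun k : Fin N => rotR^[(k : ℕ)] (fun i => (a i : ℝ)))
      ↔ LinearIndependent ℚ (fun k : Fin N => M k) := by
    have he : (fun k : Fin N => rotR^[(k : ℕ)] (fun i => (a i : ℝ)))
        = fun k => (M.map (algebraMap ℚ ℝ)) k := by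
      funext k i
      simp [rotR_iter, hM, Fin.cast_val_eq_self]
    rw [he]
    change LinearIndependent ℝ (M.map (algebraMap ℚ ℝ)).row ↔ LinearIndependent ℚ M.row
    rw [Matrix.linearIndependent_rows_iff_isUnit,
      Matrix.linearIndependent_rows_iff_isUnit, Matrix.isUnit_iff_isUnit_det,
      Matrix.isUnit_iff_isUnit_det (A := M)]
    have : (M.map (algebraMap ℚ ℝ)).det = algebraMap ℚ ℝ M.det :=
      ((algebraMap ℚ ℝ).map_det M).symm
    rw [this, isUnit_iff_ne_zero, isUnit_iff_ne_zero]
    simp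
  -- Set up `AdjoinRoot f`
  set r : AdjoinRoot f := AdjoinRoot.root f with hr
  have hrN : r ^ N = 1 := by
    have h : AdjoinRoot.mk f (X ^ N - 1) = 0 := by rw [← hf_def]; exact AdjoinRoot.mk_self
    rw [map_sub, map_pow, AdjoinRoot.mk_X, map_one, sub_eq_zero] at h
    exact h
  have hrpow : ∀ m : ℕ, r ^ m = r ^ ((m : Fin N) : ℕ) := by
    intro m
    conv_lhs => rw [← Nat.div_add_mod m N]
    rw [pow_add, pow_mul, hrN, one_pow, one_mul, Fin.val_natCast]
  set fam : Fin N → AdjoinRoot f := fun k => r ^ (k : ℕ) * AdjoinRoot.mk f A with hfam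
  have hmkA : AdjoinRoot.mk f A = ∑ n : Fin N, (a n : ℚ) • r ^ (n : ℕ) := by
    rw [hA, map_sum]
    refine Finset.sum_congr rfl fun n _ => ?_
    rw [map_mul, map_pow, AdjoinRoot.mk_X, Algebra.smul_def, AdjoinRoot.algebraMap_eq]
    rfl
  -- the basis of powers of the root
  let pb := AdjoinRoot.powerBasis hf0
  let b : Module.Basis (Fin N) ℚ (AdjoinRoot f) := pb.basis.reindex (finCongr hdeg)
  have hb : ∀ i : Fin N, b i = r ^ (i : ℕ) := by
    intro i
    simp only [b, Module.Basis.reindex_apply, pb.basis_eq_pow, AdjoinRoot.powerBasis_gen]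
    congr 1
  have key : ∀ k : Fin N, b.equivFun.symm (M k) = fam k := by
    intro k
    rw [Module.Basis.equivFun_symm_apply]
    simp only [hfam, hmkA]
    rw [Finset.mul_sum]
    have hterm : ∀ n : Fin N, r ^ (k : ℕ) * ((a n : ℚ) • r ^ (n : ℕ))
        = (a n : ℚ) • r ^ ((n + k : Fin N) : ℕ) := by
      intro n
      rw [mul_smul_comm, ← pow_add]
      congr 1
      rw [hrpow ((k : ℕ) + (n : ℕ))]
      congr 1
      rw [Nat.cast_add, Fin.cast_val_eq_self, Fin.cast_val_eq_self, add_comm]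
    rw [Finset.sum_congr rfl fun n _ => hterm n]
    refine (Fintype.sum_equiv (Equiv.addRight k) _ _ fun n => ?_).symm
    simp [hb, hM]
  have h2 : LinearIndependent ℚ (fun k : Fin N => M k) ↔ LinearIndependent ℚ fam := by
    rw [← funext key]
    exact (b.equivFun.symm.toLinearMap.linearIndependent_iff
      (LinearEquiv.ker _)).symm
  -- Step 3: independence iff span is everything
  have hcard : Fintype.card (Fin N) = Module.finrank ℚ (AdjoinRoot f) := by
    rw [Module.finrank_eq_card_basis b]
  have h3 : LinearIndependent ℚ fam ↔ Submodule.span ℚ (Set.range fam) = ⊤ := by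
    constructor
    · intro h
      exact h.span_eq_top_of_card_eq_finrank hcard
    · intro h
      exact linearIndependent_of_top_le_span_of_card_eq_finrank h.ge hcard
  -- Step 4: span iff the ideal generated by `mk f A` is everything
  have hsub1 : Submodule.span ℚ (Set.range fam)
      ≤ (Ideal.span {AdjoinRoot.mk f A}).restrictScalars ℚ := by
    rw [Submodule.span_le]
    rintro _ ⟨k, rfl⟩
    exact Ideal.mem_span_singleton.2 (Dvd.intro_left _ rfl)
  have hsub2 : (Ideal.span {AdjoinRoot.mk f A}).restrictScalars ℚ
      ≤ Submodule.span ℚ (Set.range fam) := by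
    intro x hx
    obtain ⟨c, hc⟩ := Ideal.mem_span_singleton.1 hx
    obtain ⟨q, rfl⟩ := AdjoinRoot.mk_surjective c
    rw [hc, mul_comm, ← AdjoinRoot.aeval_eq, aeval_eq_sum_range, Finset.sum_mul]
    refine Submodule.sum_mem _ fun i _ => ?_
    rw [smul_mul_assoc]
    refine Submodule.smul_mem _ _ (Submodule.subset_span ⟨(i : Fin N), ?_⟩)
    simp only [hfam]
    rw [hrpow i]
  have h4 : Submodule.span ℚ (Set.range fam) = ⊤
      ↔ Ideal.span {AdjoinRoot.mk f A} = ⊤ := by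
    constructor
    · intro h
      rw [Ideal.eq_top_iff_one]
      exact hsub1 (by rw [h]; trivial)
    · intro h
      rw [eq_top_iff]
      intro x _
      exact hsub2 (by rw [h]; trivial)
  -- Step 5 & 6: ideal is everything iff `A` is coprime to `f`
  have h6 : Ideal.span {AdjoinRoot.mk f A} = ⊤ ↔ IsCoprime A f := by
    rw [Ideal.span_singleton_eq_top]
    constructor
    · intro h
      obtain ⟨y, hy⟩ := isUnit_iff_exists_inv.1 h
      obtain ⟨q, rfl⟩ := AdjoinRoot.mk_surjective y
      have : AdjoinRoot.mk f (A * q - 1) = 0 := by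
        rw [map_sub, map_mul, map_one, hy, sub_self]
      obtain ⟨c, hcc⟩ := AdjoinRoot.mk_eq_zero.1 this
      exact ⟨q, -c, by linear_combination hcc⟩
    · rintro ⟨u, v, huv⟩
      refine IsUnit.of_mul_eq_one (AdjoinRoot.mk f u) ?_
      have := congrArg (AdjoinRoot.mk f) huv
      rw [map_add, map_mul, map_mul, map_one, AdjoinRoot.mk_self, mul_zero, add_zero] at this
      rw [mul_comm]
      exact this
  -- Step 7: coprimality iff the two divisibility conditions
  set Φ : ℚ[X] := ∑ n ∈ Finset.range N, (X : ℚ[X]) ^ n with hΦ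
  have hfact : Φ * (X - 1) = f := geom_sum_mul X N
  have hΦirr : Irreducible Φ := by
    rw [hΦ, ← cyclotomic_prime ℚ N]
    exact cyclotomic.irreducible_rat hN.pos
  have hX1irr : Irreducible ((X : ℚ[X]) - 1) := by
    have := irreducible_X_sub_C (1 : ℚ)
    rwa [map_one] at this
  have h7 : IsCoprime A f ↔ (¬ ((X : ℚ[X]) - 1 ∣ A) ∧ ¬ (Φ ∣ A)) := by
    constructor
    · intro hcop
      constructor
      · intro hdvd
        exact hX1irr.not_isUnit
          (hcop.isUnit_of_dvd' hdvd ⟨Φ, by rw [← hfact, mul_comm]⟩)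
      · intro hdvd
        exact hΦirr.not_isUnit (hcop.isUnit_of_dvd' hdvd ⟨X - 1, hfact.symm⟩)
    · rintro ⟨hd1, hd2⟩
      by_contra hncop
      classical
      have hgnu : ¬IsUnit (EuclideanDomain.gcd A f) := by
        intro h
        exact hncop (EuclideanDomain.gcd_isUnit_iff.1 h)
      have hg0 : EuclideanDomain.gcd A f ≠ 0 := by
        intro h
        exact hf0 (by simpa [h] using
          zero_dvd_iff.1 (h ▸ EuclideanDomain.gcd_dvd_right A f))
      obtain ⟨q, hqirr, hqdvd⟩ := WfDvdMonoid.exists_irreducible_factor hgnu hg0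
      have hqA : q ∣ A := hqdvd.trans (EuclideanDomain.gcd_dvd_left A f)
      have hqf : q ∣ f := hqdvd.trans (EuclideanDomain.gcd_dvd_right A f)
      have hqp : Prime q := hqirr.prime
      rw [← hfact] at hqf
      rcases hqp.dvd_mul.1 hqf with hq | hq
      · exact hd2 ((hqirr.associated_of_dvd hΦirr hq).symm.dvd.trans hqA)
      · exact hd1 ((hqirr.associated_of_dvd hX1irr hq).symm.dvd.trans hqA)
  rw [h1, h2, h3, h4, h6, h7]
end

section
/- Let N ≥ 2, let l > 10N be an integer, and let k_1,...,k_{N-1} be integers with |k_i| ≥ l for all i. Set b = (1, 1/k_1, ..., 1/k_{N-1}) ∈ ℝ^N. Then for every integer vector (α_1,...,α_N) with max_i |α_i| ≥ 2, the vector c = Σ_{i=1}^N α_i rot^{i-1}(b) satisfies ‖c‖² > ‖b‖². -/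
/-- The rotational shift operator on the Euclidean space `ℝ^N`. -/
def rotE {N : ℕ} [NeZero N] (x : EuclideanSpace ℝ (Fin N)) : EuclideanSpace ℝ (Fin N) :=
  WithLp.toLp 2 (fun i => x (i - 1))

open Fin.NatCast in
lemma rotE_iter {N : ℕ} [NeZero N] (b : EuclideanSpace ℝ (Fin N)) (m : ℕ) (j : Fin N) :
    (rotE^[m] b) j = b (j - (m : Fin N)) := by
  induction m generalizing j with
  | zero => rw [Nat.cast_zero, sub_zero]; rfl
  | succ m ih =>
    rw [Function.iterate_succ_apply']
    show (rotE^[m] b) (j - 1) = b (j - ((m + 1 : ℕ) : Fin N))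
    rw [ih]
    refine congrArg b.ofLp ?_
    push_cast
    rw [sub_sub, add_comm]

lemma norm_sq_eq_sum' {N : ℕ} [NeZero N] (x : EuclideanSpace ℝ (Fin N)) :
    ‖x‖ ^ 2 = ∑ i, (x i) ^ 2 := by
  rw [EuclideanSpace.norm_eq, Real.sq_sqrt (by positivity)]
  simp [Real.norm_eq_abs, sq_abs]

/-- For `b = (1, 1/k_1, ..., 1/k_{N-1})` with `|k_i| ≥ l > 10N`, any integer combination
`c = Σ α_i rot^{i-1}(b)` with `max |α_i| ≥ 2` satisfies `‖c‖² > ‖b‖²`. -/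
theorem stmt12 (N : ℕ) [NeZero N] (hN : 2 ≤ N) (l : ℕ) (hl : 10 * N < l)
    (k : Fin N → ℤ) (hk : ∀ i : Fin N, i ≠ 0 → (l : ℤ) ≤ |k i|)
    (b : EuclideanSpace ℝ (Fin N))
    (hb : ∀ i : Fin N, b i = if i = 0 then 1 else ((k i : ℝ))⁻¹)
    (α : Fin N → ℤ) (hα : ∃ i, 2 ≤ |α i|)
    (c : EuclideanSpace ℝ (Fin N))
    (hc : c = ∑ i : Fin N, (α i : ℝ) • rotE^[(i : ℕ)] b) :
    ‖b‖ ^ 2 < ‖c‖ ^ 2 := by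
  -- real versions of the basic quantities
  set Nr : ℝ := (N : ℝ) with hNr
  set lr : ℝ := (l : ℝ) with hlr
  have hN2 : (2 : ℝ) ≤ Nr := by rw [hNr]; exact_mod_cast hN
  have h10 : 10 * Nr + 1 ≤ lr := by
    have h : 10 * N + 1 ≤ l := hl
    rw [hNr, hlr]
    exact_mod_cast h
  have hl0 : (0 : ℝ) < lr := by linarith
  -- pick the index with maximal |α|
  obtain ⟨n, -, hmax⟩ := Finset.exists_max_image Finset.univ (fun i => |α i|)
    ⟨0, Finset.mem_univ 0⟩
  set Ar : ℝ := |(α n : ℝ)| with hAr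
  have hA2 : (2 : ℝ) ≤ Ar := by
    obtain ⟨i0, hi0⟩ := hα
    have h := hmax i0 (Finset.mem_univ i0)
    have : (2 : ℤ) ≤ |α n| := le_trans hi0 h
    rw [hAr, ← Int.cast_abs]
    exact_mod_cast this
  have hA0 : (0 : ℝ) ≤ Ar := abs_nonneg _
  have hmaxR : ∀ i : Fin N, |(α i : ℝ)| ≤ Ar := by
    intro i
    rw [hAr, ← Int.cast_abs, ← Int.cast_abs]
    exact_mod_cast hmax i (Finset.mem_univ i)
  -- coordinates of c
  have hcj : ∀ j : Fin N, c j = ∑ i : Fin N, (α i : ℝ) * b (j - i) := by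
    intro j
    rw [hc]
    rw [WithLp.ofLp_sum, Finset.sum_apply]
    refine Finset.sum_congr rfl fun i _ => ?_
    have : ((α i : ℝ) • rotE^[(i : ℕ)] b) j = (α i : ℝ) * (rotE^[(i : ℕ)] b) j := rfl
    rw [this, rotE_iter, Fin.cast_val_eq_self]
  -- bounds on b
  have hb0 : b 0 = 1 := by simp [hb]
  have hbi : ∀ i : Fin N, i ≠ 0 → |b i| ≤ lr⁻¹ := by
    intro i hi
    rw [hb i, if_neg hi, abs_inv]
    have hkl : lr ≤ |(k i : ℝ)| := by
      have h := hk i hi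
      rw [hlr, ← Int.cast_abs]
      exact_mod_cast h
    exact inv_anti₀ hl0 hkl
  have hlinv0 : (0 : ℝ) ≤ lr⁻¹ := by positivity
  -- decompose c n
  have hcn : c n = (α n : ℝ) + ∑ i ∈ Finset.univ.erase n, (α i : ℝ) * b (n - i) := by
    rw [hcj n, ← Finset.add_sum_erase _ _ (Finset.mem_univ n)]
    congr 1
    rw [sub_self, hb0, mul_one]
  have hcard : ((Finset.univ.erase n).card : ℝ) = Nr - 1 := by
    rw [Finset.card_erase_of_mem (Finset.mem_univ n), Finset.card_univ, Fintype.card_fin]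
    have h1 : 1 ≤ N := le_trans (by norm_num) hN
    push_cast [Nat.cast_sub h1]
    ring
  have hrest : |∑ i ∈ Finset.univ.erase n, (α i : ℝ) * b (n - i)| ≤ (Nr - 1) * (Ar * lr⁻¹) := by
    calc |∑ i ∈ Finset.univ.erase n, (α i : ℝ) * b (n - i)|
        ≤ ∑ i ∈ Finset.univ.erase n, |(α i : ℝ) * b (n - i)| :=
          Finset.abs_sum_le_sum_abs _ _
      _ ≤ ∑ _i ∈ Finset.univ.erase n, Ar * lr⁻¹ := by
          refine Finset.sum_le_sum fun i hi => ?_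
          rw [abs_mul]
          have hne : n - i ≠ 0 := by
            rw [sub_ne_zero]
            exact (Finset.ne_of_mem_erase hi).symm
          exact mul_le_mul (hmaxR i) (hbi _ hne) (abs_nonneg _) hA0
      _ = (Nr - 1) * (Ar * lr⁻¹) := by
          rw [Finset.sum_const, nsmul_eq_mul, hcard]
  -- key arithmetic facts
  have hfrac1 : (Nr - 1) * lr⁻¹ ≤ 1 / 10 := by
    rw [← div_eq_mul_inv, div_le_div_iff₀ hl0 (by norm_num : (0:ℝ) < 10)]
    linarith
  have hfrac2 : (Nr - 1) * (lr⁻¹) ^ 2 ≤ 1 / 200 := by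
    have heq : (Nr - 1) * (lr⁻¹) ^ 2 = (Nr - 1) / lr ^ 2 := by
      field_simp
    rw [heq, div_le_div_iff₀ (by positivity) (by norm_num : (0:ℝ) < 200)]
    nlinarith [sq_nonneg (lr - 10 * Nr - 1), sq_nonneg Nr]
  -- lower bound for |c n|
  set E : ℝ := Ar - (Nr - 1) * (Ar * lr⁻¹) with hE
  have hEbig : 9 / 5 ≤ E := by
    have : (Nr - 1) * (Ar * lr⁻¹) = Ar * ((Nr - 1) * lr⁻¹) := by ring
    rw [hE, this]
    nlinarith [mul_le_mul_of_nonneg_left hfrac1 hA0]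
  have hE0 : (0 : ℝ) ≤ E := le_trans (by norm_num) hEbig
  have hcnE : E ≤ |c n| := by
    have habs : Ar ≤ |c n| + |∑ i ∈ Finset.univ.erase n, (α i : ℝ) * b (n - i)| := by
      rw [hAr]
      have h2 : (α n : ℝ) = c n - ∑ i ∈ Finset.univ.erase n, (α i : ℝ) * b (n - i) := by
        rw [hcn]; ring
      rw [h2]
      exact abs_sub _ _
    rw [hE]
    linarith [habs, hrest]
  -- lower bound for ‖c‖²
  have hclow : E ^ 2 ≤ ‖c‖ ^ 2 := by
    rw [norm_sq_eq_sum']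
    have h1 : E ^ 2 ≤ (c n) ^ 2 := by
      have := pow_le_pow_left₀ hE0 hcnE 2
      rwa [sq_abs] at this
    refine le_trans h1 ?_
    exact Finset.single_le_sum (fun i _ => sq_nonneg (c i)) (Finset.mem_univ n)
  -- upper bound for ‖b‖²
  have hbup : ‖b‖ ^ 2 ≤ 1 + (Nr - 1) * (lr⁻¹) ^ 2 := by
    rw [norm_sq_eq_sum', ← Finset.add_sum_erase _ _ (Finset.mem_univ (0 : Fin N))]
    have h1 : (b 0) ^ 2 = 1 := by rw [hb0]; norm_num
    have h2 : ∑ i ∈ Finset.univ.erase (0 : Fin N), (b i) ^ 2 ≤ (Nr - 1) * (lr⁻¹) ^ 2 := by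
      calc ∑ i ∈ Finset.univ.erase (0 : Fin N), (b i) ^ 2
          ≤ ∑ _i ∈ Finset.univ.erase (0 : Fin N), (lr⁻¹) ^ 2 := by
            refine Finset.sum_le_sum fun i hi => ?_
            have := pow_le_pow_left₀ (abs_nonneg (b i))
              (hbi i (Finset.ne_of_mem_erase hi)) 2
            rwa [sq_abs] at this
        _ = (Nr - 1) * (lr⁻¹) ^ 2 := by
            rw [Finset.sum_const, nsmul_eq_mul]
            congr 1
            rw [Finset.card_erase_of_mem (Finset.mem_univ _), Finset.card_univ,
              Fintype.card_fin]
            have h1' : 1 ≤ N := le_trans (by norm_num) hN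
            push_cast [Nat.cast_sub h1']
            ring
    linarith
  -- conclude
  have hE2 : (81 : ℝ) / 25 ≤ E ^ 2 := by nlinarith
  calc ‖b‖ ^ 2 ≤ 1 + (Nr - 1) * (lr⁻¹) ^ 2 := hbup
    _ < 81 / 25 := by linarith
    _ ≤ E ^ 2 := hE2
    _ ≤ ‖c‖ ^ 2 := hclow
end

section
/- Let a = (a_1, a_2) ∈ ℤ² with |a_1| > |a_2| and a_1² + a_2² ≥ 4|a_1 a_2|. Then a and rot(a) = (a_2, a_1) form a Minkowski reduced basis of the lattice Λ(a) they span; in particular, a is a shortest nonzero vector of Λ(a): for all (m,n) ∈ ℤ² \ {0}, ‖m·a + n·rot(a)‖ ≥ ‖a‖. -/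
lemma key_int (m n a₁ a₂ : ℤ) (h : ¬ (m = 0 ∧ n = 0)) (hred : 4 * |a₁ * a₂| ≤ a₁ ^ 2 + a₂ ^ 2) :
    a₁ ^ 2 + a₂ ^ 2 ≤ (m * a₁ + n * a₂) ^ 2 + (m * a₂ + n * a₁) ^ 2 := by
  have hmn : 1 ≤ m ^ 2 + n ^ 2 - |m * n| := by
    rcases eq_or_ne m 0 with hm | hm
    · subst hm
      have hn : n ≠ 0 := fun hn => h ⟨rfl, hn⟩
      have h1 := Int.one_le_abs hn
      simp only [zero_mul, abs_zero]
      nlinarith [sq_abs n]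
    · have hm1 : 1 ≤ |m| := Int.one_le_abs hm
      rcases eq_or_ne n 0 with hn | hn
      · subst hn
        simp only [mul_zero, abs_zero]
        nlinarith [sq_abs m]
      · have hn1 : 1 ≤ |n| := Int.one_le_abs hn
        have h1 : |m * n| = |m| * |n| := abs_mul m n
        nlinarith [sq_nonneg (|m| - |n|), sq_abs m, sq_abs n]
  have habs : -(|m * n| * |a₁ * a₂|) ≤ m * n * (a₁ * a₂) := by
    rw [← abs_mul]
    exact neg_abs_le _
  have hS : 0 ≤ a₁ ^ 2 + a₂ ^ 2 := by positivity
  have habs0 : (0:ℤ) ≤ |m * n| := abs_nonneg _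
  nlinarith [mul_le_mul_of_nonneg_left hred habs0]

lemma norm2 (x : EuclideanSpace ℝ (Fin 2)) : ‖x‖ = Real.sqrt ((x 0) ^ 2 + (x 1) ^ 2) := by
  rw [EuclideanSpace.norm_eq]
  congr 1
  rw [Fin.sum_univ_two]
  simp [sq_abs]

/-- For `a = (a_1, a_2) ∈ ℤ²` with `|a_1| > |a_2|` and `a_1² + a_2² ≥ 4|a_1 a_2|`,
the vectors `a` and `rot(a) = (a_2, a_1)` form a Minkowski reduced basis of the lattice
`Λ(a)` they span; in particular `a` is a shortest nonzero vector of `Λ(a)`. -/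
theorem stmt16 (a₁ a₂ : ℤ) (hgt : |a₂| < |a₁|) (hred : 4 * |a₁ * a₂| ≤ a₁ ^ 2 + a₂ ^ 2)
    (v w : EuclideanSpace ℝ (Fin 2))
    (hv : v 0 = (a₁ : ℝ) ∧ v 1 = (a₂ : ℝ))
    (hw : w 0 = (a₂ : ℝ) ∧ w 1 = (a₁ : ℝ)) :
    (∀ m n : ℤ, ¬ (m = 0 ∧ n = 0) → ‖v‖ ≤ ‖(m : ℝ) • v + (n : ℝ) • w‖) ∧
    (∀ m n : ℤ, n ≠ 0 → ‖w‖ ≤ ‖(m : ℝ) • v + (n : ℝ) • w‖) := by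
  obtain ⟨hv0, hv1⟩ := hv
  obtain ⟨hw0, hw1⟩ := hw
  have main : ∀ m n : ℤ, ¬ (m = 0 ∧ n = 0) →
      Real.sqrt ((a₁:ℝ) ^ 2 + (a₂:ℝ) ^ 2) ≤ ‖(m : ℝ) • v + (n : ℝ) • w‖ := by
    intro m n h
    rw [norm2]
    have e0 : ((m : ℝ) • v + (n : ℝ) • w) 0 = m * a₁ + n * a₂ := by
      simp [hv0, hw0]
    have e1 : ((m : ℝ) • v + (n : ℝ) • w) 1 = m * a₂ + n * a₁ := by
      simp [hv1, hw1]
    rw [e0, e1]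
    apply Real.sqrt_le_sqrt
    have := key_int m n a₁ a₂ h hred
    have h2 := (Int.cast_le (R := ℝ)).mpr this
    push_cast at h2 ⊢
    linarith
  constructor
  · intro m n h
    have := main m n h
    rw [norm2 v, hv0, hv1]
    exact this
  · intro m n hn
    have := main m n (by rintro ⟨_, rfl⟩; exact hn rfl)
    rw [norm2 w, hw0, hw1]
    rw [show (a₂:ℝ)^2 + (a₁:ℝ)^2 = (a₁:ℝ)^2 + (a₂:ℝ)^2 by ring]
    exact this
end
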